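/- arXiv:2311.06870 — 11 statements merged into one kernel-verified Lean document; each statement's English description precedes it below -/
import Mathlib

section
/- Let V be a finite-dimensional inner product space and B, C ⊆ V subspaces. Then B^⊥ ∩ (C ∩ (B ∩ C)^⊥)^⊥ = B^⊥ ∩ C^⊥. -/
open RealInnerProductSpace

/-- For subspaces `B C` of a finite-dimensional real inner product
space `V`, `Bᗮ ⊓ (C ⊓ (B ⊓ C)ᗮ)ᗮ = Bᗮ ⊓ Cᗮ`. -/
theorem perp_inf_perp_eq {V : Type*} [NormedAddCommGroup V]
    [InnerProductSpace ℝ V] [FiniteDimensional ℝ V] (B C : Submodule ℝ V) :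
    Bᗮ ⊓ (C ⊓ (B ⊓ C)ᗮ)ᗮ = Bᗮ ⊓ Cᗮ := by
  have hperp : (C ⊓ (B ⊓ C)ᗮ)ᗮ = Cᗮ ⊔ (B ⊓ C) := by
    calc (C ⊓ (B ⊓ C)ᗮ)ᗮ = (Cᗮᗮ ⊓ (B ⊓ C)ᗮ)ᗮ := by
          rw [Submodule.orthogonal_orthogonal]
      _ = ((Cᗮ ⊔ (B ⊓ C))ᗮ)ᗮ := by rw [Submodule.inf_orthogonal]
      _ = Cᗮ ⊔ (B ⊓ C) := Submodule.orthogonal_orthogonal _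
  rw [hperp]
  apply le_antisymm
  · rintro x ⟨hxB, hx⟩
    obtain ⟨y, hy, z, hz, rfl⟩ := Submodule.mem_sup.mp hx
    have hz0 : z = 0 := by
      have h1 : ⟪z, y + z⟫ = 0 := hxB z hz.1
      have h2 : ⟪z, y⟫ = 0 :=
        (Submodule.orthogonal_le inf_le_right) hy z hz
      have h3 : ⟪z, z⟫ = 0 := by
        rw [inner_add_right, h2, zero_add] at h1; exact h1
      exact inner_self_eq_zero.mp h3
    subst hz0
    rw [add_zero] at hxB ⊢
    exact ⟨hxB, hy⟩
  · exact inf_le_inf_left _ le_sup_left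
end

section
/- Let A, B, C ⊆ V be subspaces of a finite-dimensional inner product space V with B ⊆ A and C ⊆ A. Then (A ⊖ B) ⊖ (C ⊖ (B ∩ C)) = A ⊖ (B + C), where X ⊖ Y := X ∩ Y^⊥. -/
/-- For subspaces `A B C` of a finite-dimensional real inner product
space `V` with `B ⊆ A` and `C ⊆ A`, and `X ⊖ Y := X ⊓ Yᗮ`, one has
`(A ⊖ B) ⊖ (C ⊖ (B ⊓ C)) = A ⊖ (B + C)`. -/
theorem ominus_ominus_eq_ominus_sup {V : Type*} [NormedAddCommGroup V]
    [InnerProductSpace ℝ V] [FiniteDimensional ℝ V] (A B C : Submodule ℝ V)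
    (hB : B ≤ A) (hC : C ≤ A) :
    (A ⊓ Bᗮ) ⊓ (C ⊓ (B ⊓ C)ᗮ)ᗮ = A ⊓ (B ⊔ C)ᗮ := by
  have hBC : (B ⊓ C) ⊔ ((B ⊓ C)ᗮ ⊓ C) = C :=
    Submodule.sup_orthogonal_inf_of_hasOrthogonalProjection inf_le_right
  apply le_antisymm
  · rintro x ⟨⟨hA, hBperp⟩, hperp⟩
    refine ⟨hA, ?_⟩
    rw [← Submodule.inf_orthogonal]
    refine ⟨hBperp, ?_⟩
    have hx1 : x ∈ (B ⊓ C)ᗮ := Submodule.orthogonal_le inf_le_left hBperp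
    have hx2 : x ∈ ((B ⊓ C)ᗮ ⊓ C)ᗮ := by
      rwa [show (B ⊓ C)ᗮ ⊓ C = C ⊓ (B ⊓ C)ᗮ from inf_comm _ _]
    have : x ∈ ((B ⊓ C) ⊔ ((B ⊓ C)ᗮ ⊓ C))ᗮ := by
      rw [← Submodule.inf_orthogonal]; exact ⟨hx1, hx2⟩
    rwa [hBC] at this
  · rintro x ⟨hA, hsup⟩
    rw [← Submodule.inf_orthogonal] at hsup
    exact ⟨⟨hA, hsup.1⟩, Submodule.orthogonal_le inf_le_left hsup.2⟩
end

section
/- Let A, B, C ⊆ V be subspaces of a finite-dimensional inner product space V with B ⊆ A and C ⊆ A. Then dim((A ⊖ B) ⊖ (C ⊖ (B ∩ C))) = (dim A − dim B) − (dim C − dim(B ∩ C)). -/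
/-- For subspaces `A B C` of a finite-dimensional real inner product
space `V` with `B ⊆ A` and `C ⊆ A`, and `X ⊖ Y := X ⊓ Yᗮ`, one has
`dim ((A ⊖ B) ⊖ (C ⊖ (B ⊓ C))) = (dim A − dim B) − (dim C − dim (B ⊓ C))`. -/
theorem finrank_ominus_ominus {V : Type*} [NormedAddCommGroup V]
    [InnerProductSpace ℝ V] [FiniteDimensional ℝ V] (A B C : Submodule ℝ V)
    (hB : B ≤ A) (hC : C ≤ A) :
    (Module.finrank ℝ ↥((A ⊓ Bᗮ) ⊓ (C ⊓ (B ⊓ C)ᗮ)ᗮ) : ℤ) =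
      ((Module.finrank ℝ ↥A : ℤ) - Module.finrank ℝ ↥B) -
        ((Module.finrank ℝ ↥C : ℤ) - Module.finrank ℝ ↥(B ⊓ C)) := by
  set X : Submodule ℝ V := A ⊓ Bᗮ with hX
  set D : Submodule ℝ V := C ⊓ (B ⊓ C)ᗮ with hD
  -- dim X = dim A - dim B
  have h1 : Module.finrank ℝ B + Module.finrank ℝ X = Module.finrank ℝ A := by
    have h := Submodule.finrank_add_inf_finrank_orthogonal (𝕜 := ℝ) hB
    rwa [show Bᗮ ⊓ A = X by rw [hX, inf_comm]] at h
  -- dim D = dim C - dim (B ⊓ C)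
  have h2 : Module.finrank ℝ (B ⊓ C : Submodule ℝ V) + Module.finrank ℝ D
      = Module.finrank ℝ C := by
    have h := Submodule.finrank_add_inf_finrank_orthogonal (𝕜 := ℝ)
      (inf_le_right : B ⊓ C ≤ C)
    rwa [show (B ⊓ C)ᗮ ⊓ C = D by rw [hD, inf_comm]] at h
  -- Xᗮ = Aᗮ ⊔ B
  have hXo : Xᗮ = Aᗮ ⊔ B := by
    have h : (Aᗮ ⊔ B)ᗮ = X := by
      rw [← Submodule.inf_orthogonal, Submodule.orthogonal_orthogonal]
    rw [← h, Submodule.orthogonal_orthogonal]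
  -- D ⊓ Xᗮ = ⊥
  have hdisj : D ⊓ Xᗮ = ⊥ := by
    rw [hXo, eq_bot_iff]
    rintro x ⟨⟨hxC, hxP⟩, hx2⟩
    obtain ⟨a, b, rfl⟩ := Submodule.mem_sup'.mp hx2
    have haA : (a : V) ∈ A := by
      have h : (a : V) = (↑a + ↑b) - (↑b : V) := (add_sub_cancel_right _ _).symm
      rw [h]
      exact A.sub_mem (hC hxC) (hB b.2)
    have ha0 : (a : V) = 0 := by
      have h : (a : V) ∈ A ⊓ Aᗮ := ⟨haA, a.2⟩
      rwa [Submodule.inf_orthogonal_eq_bot, Submodule.mem_bot] at h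
    have hxB : (a : V) + (b : V) ∈ B ⊓ C := by
      rw [ha0, zero_add]; exact ⟨b.2, by rwa [ha0, zero_add] at hxC⟩
    have h0 : inner ℝ ((a : V) + (b : V)) ((a : V) + (b : V)) = (0 : ℝ) := hxP _ hxB
    simpa [Submodule.mem_bot] using inner_self_eq_zero.mp h0
  -- X ⊔ Dᗮ = ⊤
  have hsup : X ⊔ Dᗮ = ⊤ := by
    have h : (X ⊔ Dᗮ)ᗮ = ⊥ := by
      rw [← Submodule.inf_orthogonal, Submodule.orthogonal_orthogonal, inf_comm]
      exact hdisj
    have h' := congrArg Submodule.orthogonal h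
    rwa [Submodule.orthogonal_orthogonal, Submodule.bot_orthogonal_eq_top] at h'
  -- dimension count
  have h3 := Submodule.finrank_sup_add_finrank_inf_eq X Dᗮ
  rw [hsup] at h3
  have h4 : Module.finrank ℝ D + Module.finrank ℝ Dᗮ = Module.finrank ℝ V :=
    Submodule.finrank_add_finrank_orthogonal D
  have h5 : Module.finrank ℝ (⊤ : Submodule ℝ V) = Module.finrank ℝ V :=
    finrank_top ℝ V
  omega
end

section
/- Let P and Q be finite posets, let f_• : P → Q and f^• : Q → P form a Galois connection (f_•(p) ≤ q iff p ≤ f^•(q)), let M be a commutative monoid, and let m : P → M be a function. If m' : P → M satisfies Σ_{a ≤ b} m'(a) = m(b) for all b ∈ P (i.e. m' is a monoidal Möbius inverse of m), then the pushforward (f_•)_♯ m' : Q → M, defined by (f_•)_♯ m'(q) = Σ_{p ∈ f_•⁻¹(q)} m'(p), is a monoidal Möbius inverse of the pullback (f^•)^♯ m : Q → M defined by q ↦ m(f^•(q)); that is, Σ_{q' ≤ q} (f_•)_♯ m'(q') = m(f^•(q)) for all q ∈ Q. -/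
/-- **Monoidal Rota Galois Connection Theorem.** Let `P, Q` be finite
posets, `(l, u)` a Galois connection between them, `M` a commutative monoid and
`m : P → M`. If `m' : P → M` is a monoidal Möbius inverse of `m`
(`∑_{a ≤ b} m'(a) = m(b)` for all `b`), then the pushforward `l_♯ m'` is a monoidal
Möbius inverse of the pullback `u^♯ m`:
`∑_{q' ≤ q} l_♯ m'(q') = m (u q)` for all `q ∈ Q`. -/
theorem monoidal_RGCT {P Q M : Type*} [PartialOrder P] [PartialOrder Q]
    [Fintype P] [Fintype Q] [DecidableRel ((· ≤ ·) : P → P → Prop)] [DecidableRel ((· ≤ ·) : Q → Q → Prop)] [DecidableEq Q]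
    [AddCommMonoid M]
    (l : P → Q) (u : Q → P) (hgc : GaloisConnection l u)
    (m m' : P → M)
    (hm' : ∀ b : P, ∑ a ∈ Finset.univ.filter (fun a => a ≤ b), m' a = m b) :
    ∀ q : Q,
      ∑ q' ∈ Finset.univ.filter (fun q' => q' ≤ q),
        ∑ p ∈ Finset.univ.filter (fun p => l p = q'), m' p = m (u q) := by
  intro q
  rw [Finset.sum_fiberwise_eq_sum_filter Finset.univ _ l m']
  rw [← hm' (u q)]
  congr 1
  ext p
  simp [hgc p q]
end

section
/- Let V be a finite-dimensional vector space, I a finite set, and {W(i)}_{i∈I}, {U(i)}_{i∈I} two families of subspaces of V that are transversal to each other. Then the family {W(i) + U(i)}_{i∈I} is a transverse family: dim(Σ_{i∈I}(W(i)+U(i))) = Σ_{i∈I} dim(W(i)+U(i)). -/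
open Module

lemma finrank_iSup_finset_le {F V : Type*} [Field F] [AddCommGroup V]
    [Module F V] [FiniteDimensional F V] {I : Type*} (X : I → Submodule F V)
    (s : Finset I) :
    Module.finrank F ↥(⨆ i ∈ s, X i) ≤ ∑ i ∈ s, Module.finrank F ↥(X i) := by
  classical
  induction s using Finset.induction with
  | empty => simp
  | @insert a s hx ih =>
    rw [Finset.iSup_insert, Finset.sum_insert hx]
    calc Module.finrank F ↥(X a ⊔ ⨆ i ∈ s, X i)
        ≤ Module.finrank F ↥(X a) + Module.finrank F ↥(⨆ i ∈ s, X i) := by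
          have := Submodule.finrank_sup_add_finrank_inf_eq (X a) (⨆ i ∈ s, X i)
          omega
      _ ≤ _ := by omega

/-- If the two families `{W(i)}_{i∈I}` and `{U(i)}_{i∈I}` of
subspaces of a finite-dimensional vector space `V` are transversal to each other,
then the family `{W(i) + U(i)}_{i∈I}` is a transverse family:
`dim (Σ_i (W(i)+U(i))) = Σ_i dim (W(i)+U(i))`. -/
theorem sum_of_transversal_is_transverse {F V : Type*} [Field F] [AddCommGroup V]
    [Module F V] [FiniteDimensional F V] {I : Type*} [Fintype I]
    (W U : I → Submodule F V)
    (h : Module.finrank F ↥((⨆ i, W i) ⊔ ⨆ i, U i) =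
      ∑ i, Module.finrank F ↥(W i) + ∑ i, Module.finrank F ↥(U i)) :
    Module.finrank F ↥(⨆ i, W i ⊔ U i) = ∑ i, Module.finrank F ↥(W i ⊔ U i) := by
  have heq : (⨆ i, W i ⊔ U i) = (⨆ i, W i) ⊔ ⨆ i, U i := by
    rw [iSup_sup_eq]
  have h1 : Module.finrank F ↥(⨆ i, W i ⊔ U i) ≤ ∑ i, Module.finrank F ↥(W i ⊔ U i) := by
    have := finrank_iSup_finset_le (fun i => W i ⊔ U i) Finset.univ
    rwa [show (⨆ i ∈ Finset.univ, W i ⊔ U i) = ⨆ i, W i ⊔ U i by simp [iSup_subtype]] at this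
  have h2 : ∀ i, Module.finrank F ↥(W i ⊔ U i) ≤
      Module.finrank F ↥(W i) + Module.finrank F ↥(U i) := fun i => by
    have := Submodule.finrank_sup_add_finrank_inf_eq (W i) (U i)
    omega
  have h3 : ∑ i, Module.finrank F ↥(W i ⊔ U i) ≤
      ∑ i, Module.finrank F ↥(W i) + ∑ i, Module.finrank F ↥(U i) := by
    rw [← Finset.sum_add_distrib]
    exact Finset.sum_le_sum fun i _ => h2 i
  rw [heq] at *
  omega
end

section
/- Let R and S be finite posets, V a finite-dimensional vector space, and M₁ : R → gr(V), M₂ : S → gr(V) functions such that {M₁(r)}_{r∈R} and {M₂(s)}_{s∈S} are transverse families. Suppose h : R → S is an order-preserving map such that the pushforward h_♯M₁ is Möbius equivalent to M₂, i.e. Σ_{s' ≤ s} h_♯M₁(s') = Σ_{s' ≤ s} M₂(s') for all s ∈ S. Then for every s ∈ S, dim(M₂(s)) = Σ_{r ∈ h⁻¹(s)} dim(M₁(r)). -/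
lemma aux_finrank_biSup_le {F V ι : Type*} [Field F] [AddCommGroup V] [Module F V]
    [FiniteDimensional F V] [DecidableEq ι] (M : ι → Submodule F V) (T : Finset ι) :
    Module.finrank F ↥(⨆ i ∈ T, M i) ≤ ∑ i ∈ T, Module.finrank F ↥(M i) := by
  induction T using Finset.cons_induction with
  | empty => simp
  | cons a T ha ih =>
    rw [Finset.cons_eq_insert, Finset.iSup_insert, Finset.sum_insert ha]
    have := Submodule.finrank_sup_add_finrank_inf_eq (M a) (⨆ i ∈ T, M i)
    omega

lemma aux_transverse_subset {F V ι : Type*} [Field F] [AddCommGroup V] [Module F V]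
    [FiniteDimensional F V] [Fintype ι] [DecidableEq ι] (M : ι → Submodule F V)
    (hM : Module.finrank F ↥(⨆ i, M i) = ∑ i, Module.finrank F ↥(M i)) (T : Finset ι) :
    Module.finrank F ↥(⨆ i ∈ T, M i) = ∑ i ∈ T, Module.finrank F ↥(M i) := by
  have h1 := aux_finrank_biSup_le M T
  have h2 := aux_finrank_biSup_le M Tᶜ
  have h3 : (⨆ i, M i) = (⨆ i ∈ T, M i) ⊔ (⨆ i ∈ Tᶜ, M i) := by
    rw [← Finset.iSup_union, Finset.union_compl]; simp
  have h4 := Submodule.finrank_sup_add_finrank_inf_eq (⨆ i ∈ T, M i) (⨆ i ∈ Tᶜ, M i)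
  have h5 : ∑ i ∈ T, Module.finrank F ↥(M i) + ∑ i ∈ Tᶜ, Module.finrank F ↥(M i)
      = ∑ i, Module.finrank F ↥(M i) := Finset.sum_add_sum_compl T _
  rw [h3] at hM
  omega


/-- Let `R, S` be finite posets, `V` a finite-dimensional vector
space, and `M₁ : R → gr(V)`, `M₂ : S → gr(V)` with `{M₁(r)}` and `{M₂(s)}` transverse
families. If `h : R → S` is order-preserving and the pushforward `h_♯M₁` is Möbius
equivalent to `M₂` (the sums of values over every down-set agree), then for every
`s ∈ S`, `dim (M₂ s) = Σ_{r ∈ h⁻¹(s)} dim (M₁ r)`. -/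
theorem dim_pushforward_of_mobius_equivalent {F V : Type*} [Field F] [AddCommGroup V]
    [Module F V] [FiniteDimensional F V]
    {R S : Type*} [PartialOrder R] [PartialOrder S] [Fintype R] [Fintype S]
    [DecidableEq S] [DecidableRel ((· ≤ ·) : S → S → Prop)]
    (M₁ : R → Submodule F V) (M₂ : S → Submodule F V)
    (hM₁ : Module.finrank F ↥(⨆ r, M₁ r) = ∑ r, Module.finrank F ↥(M₁ r))
    (hM₂ : Module.finrank F ↥(⨆ s, M₂ s) = ∑ s, Module.finrank F ↥(M₂ s))
    (h : R → S) (hmono : Monotone h)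
    (hequiv : ∀ s : S,
      (⨆ s' ∈ Finset.univ.filter (fun s' => s' ≤ s),
        ⨆ r ∈ Finset.univ.filter (fun r => h r = s'), M₁ r) =
      ⨆ s' ∈ Finset.univ.filter (fun s' => s' ≤ s), M₂ s') :
    ∀ s : S, Module.finrank F ↥(M₂ s) =
      ∑ r ∈ Finset.univ.filter (fun r => h r = s), Module.finrank F ↥(M₁ r) := by
  have key : ∀ s : S, ∑ s' ∈ Finset.univ.filter (fun s' => s' ≤ s), Module.finrank F ↥(M₂ s')
      = ∑ s' ∈ Finset.univ.filter (fun s' => s' ≤ s),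
          ∑ r ∈ Finset.univ.filter (fun r => h r = s'), Module.finrank F ↥(M₁ r) := by
    intro s
    classical
    have e1 : (⨆ s' ∈ Finset.univ.filter (fun s' => s' ≤ s),
          ⨆ r ∈ Finset.univ.filter (fun r => h r = s'), M₁ r)
        = ⨆ r ∈ Finset.univ.filter (fun r => h r ≤ s), M₁ r := by
      apply le_antisymm
      · refine iSup₂_le fun s' hs' => iSup₂_le fun r hr => le_iSup₂_of_le r ?_ le_rfl
        simp only [Finset.mem_filter, Finset.mem_univ, true_and] at *
        exact hr ▸ hs'
      · refine iSup₂_le fun r hr => ?_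
        simp only [Finset.mem_filter, Finset.mem_univ, true_and] at hr
        exact le_iSup₂_of_le (h r) (by simp [hr]) (le_iSup₂_of_le r (by simp) le_rfl)
    have e2 := congrArg (fun W : Submodule F V => Module.finrank F ↥W) (hequiv s)
    rw [e1] at e2
    rw [aux_transverse_subset M₁ hM₁, aux_transverse_subset M₂ hM₂] at e2
    have e3 := Finset.sum_fiberwise_of_maps_to (s := Finset.univ.filter (fun r => h r ≤ s))
      (t := Finset.univ.filter (fun s' => s' ≤ s)) (g := h)
      (fun r hr => Finset.mem_filter.mpr ⟨Finset.mem_univ _, (Finset.mem_filter.mp hr).2⟩)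
      (fun r => Module.finrank F ↥(M₁ r))
    rw [← e2, ← e3]
    refine Finset.sum_congr rfl fun s' hs' => Finset.sum_congr ?_ fun _ _ => rfl
    simp only [Finset.mem_filter, Finset.mem_univ, true_and] at hs'
    rw [Finset.filter_filter]
    ext r
    simp only [Finset.mem_filter, Finset.mem_univ, true_and]
    exact ⟨And.right, fun h' => ⟨h' ▸ hs', h'⟩⟩
  intro s
  induction s using WellFoundedLT.induction with
  | _ s ih =>
    classical
    have hsplit : Finset.univ.filter (fun s' => s' ≤ s)
        = insert s (Finset.univ.filter (fun s' => s' < s)) := by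
      ext x
      simp [le_iff_lt_or_eq, or_comm]
    have k := key s
    rw [hsplit, Finset.sum_insert (by simp), Finset.sum_insert (by simp)] at k
    have hlt : ∑ s' ∈ Finset.univ.filter (fun s' => s' < s), Module.finrank F ↥(M₂ s')
        = ∑ s' ∈ Finset.univ.filter (fun s' => s' < s),
            ∑ r ∈ Finset.univ.filter (fun r => h r = s'), Module.finrank F ↥(M₁ r) :=
      Finset.sum_congr rfl fun s' hs' => ih s' (by simpa using hs')
    omega
end

section
/- Let P = {p₁ < ⋯ < pₙ} be a finite linear order, V a finite-dimensional inner product space, and F̄ : Int(P) → gr(V) an intersection-monotone space function: F̄ is monotone with respect to the product order on intervals, and F̄([p_{i+1}, p_j]) ∩ F̄([p_i, p_{j+1}]) = F̄([p_i, p_j]) for all 1 ≤ i < j ≤ n (with [p_i, p_{n+1}] := [p_i, ∞)). Define the ×-Orthogonal Inverse OI F̄ by OI F̄([p_i, p_j]) := (F̄([p_i,p_j]) ⊖ F̄([p_i,p_{j−1}])) ⊖ (F̄([p_{i−1},p_j]) ⊖ F̄([p_{i−1},p_{j−1}])) (with the boundary conventions that terms with index 0 are the zero subspace), where X ⊖ Y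 := X ∩ Y^⊥. Then OI F̄ is a monoidal Möbius inverse of F̄: for every interval J ∈ Int(P), Σ_{I ≤_× J} OI F̄(I) = F̄(J), where I ≤_× J is the product order on intervals. -/
/-- Key orthogonal lattice identity: if `Z ≤ X ≤ W` and `Z ≤ Y ≤ W`, then
`Y ⊔ X ⊔ ((W ⊖ X) ⊖ (Y ⊖ Z)) = W`, where `A ⊖ B = A ⊓ Bᗮ`. -/
lemma oi_key_lemma {V : Type*} [NormedAddCommGroup V] [InnerProductSpace ℝ V]
    [FiniteDimensional ℝ V] (W X Y Z : Submodule ℝ V)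
    (hZX : Z ≤ X) (hZY : Z ≤ Y) (hXW : X ≤ W) (hYW : Y ≤ W) :
    Y ⊔ X ⊔ (W ⊓ Xᗮ ⊓ (Y ⊓ Zᗮ)ᗮ) = W := by
  have h1 : Z ⊔ Zᗮ ⊓ Y = Y := Submodule.sup_orthogonal_inf_of_hasOrthogonalProjection hZY
  have h2 : X ⊔ (Y ⊓ Zᗮ) = X ⊔ Y := by
    rw [inf_comm]
    calc X ⊔ (Zᗮ ⊓ Y) = (X ⊔ Z) ⊔ (Zᗮ ⊓ Y) := by rw [sup_eq_left.mpr hZX]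
    _ = X ⊔ (Z ⊔ Zᗮ ⊓ Y) := by rw [sup_assoc]
    _ = X ⊔ Y := by rw [h1]
  have h3 : Xᗮ ⊓ (Y ⊓ Zᗮ)ᗮ = (X ⊔ Y)ᗮ := by
    rw [Submodule.inf_orthogonal, h2]
  calc Y ⊔ X ⊔ (W ⊓ Xᗮ ⊓ (Y ⊓ Zᗮ)ᗮ) = (X ⊔ Y) ⊔ ((X ⊔ Y)ᗮ ⊓ W) := by
        rw [inf_assoc, h3, sup_comm Y X, inf_comm]
  _ = W := Submodule.sup_orthogonal_inf_of_hasOrthogonalProjection (sup_le hXW hYW)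

/-- Let `P = {p₁ < ⋯ < pₙ}` be a finite linear order and
`F̄ : Int(P) → gr(V)` an intersection-monotone space function valued in the
subspaces of a finite-dimensional real inner product space `V`.  We encode the
intervals of `P` as pairs `(a, b)` of natural numbers with `1 ≤ a ≤ b ≤ n + 1`
and `a ≤ n`, where `b = n + 1` encodes the interval `[p_a, ∞)`; index-`0` values
are the zero subspace (the boundary convention).  The `×`-Orthogonal Inverse
`OI F̄([p_i, p_j]) = (F̄([p_i,p_j]) ⊖ F̄([p_i,p_{j−1}])) ⊖ (F̄([p_{i−1},p_j]) ⊖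
F̄([p_{i−1},p_{j−1}]))` (with `OI F̄([p_i,p_i]) = F̄([p_i,p_i]) ⊖ F̄([p_{i−1},p_i])`
on the diagonal), where `X ⊖ Y := X ⊓ Yᗮ`, is a monoidal Möbius inverse of `F̄`:
for every interval `J`, the sum (supremum) of `OI F̄(I)` over all intervals
`I ≤_× J` equals `F̄(J)`. -/
theorem orthogonal_inversion_is_monoidal_mobius_inverse
    {V : Type*} [NormedAddCommGroup V] [InnerProductSpace ℝ V] [FiniteDimensional ℝ V]
    (n : ℕ) (hn : 1 ≤ n) (F : ℕ → ℕ → Submodule ℝ V)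
    (hzero : ∀ b, F 0 b = ⊥)
    (hmono : ∀ a b c d, 1 ≤ a → a ≤ b → b ≤ n + 1 → a ≤ n →
      1 ≤ c → c ≤ d → d ≤ n + 1 → c ≤ n → a ≤ c → b ≤ d → F a b ≤ F c d)
    (hint : ∀ i j, 1 ≤ i → i < j → j ≤ n → F (i + 1) j ⊓ F i (j + 1) = F i j)
    (OI : ℕ → ℕ → Submodule ℝ V)
    (hOI : ∀ i j, OI i j =
      if i = j then F i i ⊓ (F (i - 1) i)ᗮ
      else (F i j ⊓ (F i (j - 1))ᗮ) ⊓ ((F (i - 1) j ⊓ (F (i - 1) (j - 1))ᗮ))ᗮ) :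
    ∀ c d, 1 ≤ c → c ≤ d → d ≤ n + 1 → c ≤ n →
      (⨆ a ∈ Finset.Icc 1 c, ⨆ b ∈ Finset.Icc a d, OI a b) = F c d := by
  -- A convenient monotonicity lemma covering boundary (index 0) cases.
  have key_le : ∀ a b a' b', a ≤ a' → b ≤ b' → a' ≤ b → a' ≤ n → b' ≤ n + 1 →
      F a b ≤ F a' b' := by
    intro a b a' b' haa hbb hab han hbn
    rcases Nat.eq_zero_or_pos a with ha0 | ha1
    · subst ha0; rw [hzero]; exact bot_le
    · have h1a' : 1 ≤ a' := le_trans ha1 haa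
      exact hmono a b a' b' ha1 (le_trans haa hab) (le_trans hbb hbn)
        (le_trans haa han) h1a' (le_trans hab hbb) hbn han haa hbb
  -- Row lemma: for `1 ≤ c ≤ n` and `c ≤ d ≤ n+1`,
  -- `F (c-1) d ⊔ (⨆ b ∈ [c,d], OI c b) = F c d`.
  have row : ∀ c, 1 ≤ c → c ≤ n → ∀ d, c ≤ d → d ≤ n + 1 →
      F (c - 1) d ⊔ (⨆ b ∈ Finset.Icc c d, OI c b) = F c d := by
    intro c hc1 hcn d hcd
    induction d, hcd using Nat.le_induction with
    | base =>
      intro _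
      rw [Finset.Icc_self]
      simp only [Finset.mem_singleton, iSup_iSup_eq_left]
      rw [hOI c c, if_pos rfl, inf_comm]
      exact Submodule.sup_orthogonal_inf_of_hasOrthogonalProjection
        (key_le (c - 1) c c c (Nat.sub_le c 1) le_rfl le_rfl hcn (by omega))
    | succ j hj ih =>
      intro hdn
      have hjn : j ≤ n := by omega
      have IH := ih (by omega)
      rw [← Finset.insert_Icc_right_eq_Icc_add_one (by omega : c ≤ j + 1), Finset.iSup_insert,
        hOI c (j + 1), if_neg (by omega : c ≠ j + 1)]
      simp only [Nat.add_sub_cancel]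
      set S : Submodule ℝ V := ⨆ b ∈ Finset.Icc c j, OI c b with hS
      set W := F c (j + 1)
      set X := F c j
      set Y := F (c - 1) (j + 1)
      set Z := F (c - 1) j
      have hZX : Z ≤ X := key_le (c - 1) j c j (Nat.sub_le c 1) le_rfl hj hcn (by omega)
      have hZY : Z ≤ Y := key_le (c - 1) j (c - 1) (j + 1) le_rfl (by omega)
        (by omega) (by omega) hdn
      have hXW : X ≤ W := key_le c j c (j + 1) le_rfl (by omega) hj hcn hdn
      have hYW : Y ≤ W := key_le (c - 1) (j + 1) c (j + 1) (Nat.sub_le c 1) le_rfl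
        (by omega) hcn hdn
      calc Y ⊔ (W ⊓ Xᗮ ⊓ (Y ⊓ Zᗮ)ᗮ ⊔ S)
          = (Y ⊔ S) ⊔ (W ⊓ Xᗮ ⊓ (Y ⊓ Zᗮ)ᗮ) := by
            rw [sup_comm (W ⊓ Xᗮ ⊓ (Y ⊓ Zᗮ)ᗮ) S, ← sup_assoc]
        _ = ((Y ⊔ Z) ⊔ S) ⊔ (W ⊓ Xᗮ ⊓ (Y ⊓ Zᗮ)ᗮ) := by
            rw [sup_eq_left.mpr hZY]
        _ = (Y ⊔ (Z ⊔ S)) ⊔ (W ⊓ Xᗮ ⊓ (Y ⊓ Zᗮ)ᗮ) := by ac_rfl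
        _ = (Y ⊔ X) ⊔ (W ⊓ Xᗮ ⊓ (Y ⊓ Zᗮ)ᗮ) := by rw [IH]
        _ = W := oi_key_lemma W X Y Z hZX hZY hXW hYW
  -- Main induction on `c`.
  intro c d hc1 hcd hdn hcn
  induction c, hc1 using Nat.le_induction with
  | base =>
    rw [Finset.Icc_self]
    simp only [Finset.mem_singleton, iSup_iSup_eq_left]
    have h := row 1 le_rfl hn d hcd hdn
    rwa [show (1 : ℕ) - 1 = 0 from rfl, hzero, bot_sup_eq] at h
  | succ c hc ihc =>
    have hcd' : c ≤ d := by omega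
    have hcn' : c ≤ n := by omega
    rw [← Finset.insert_Icc_right_eq_Icc_add_one (by omega : 1 ≤ c + 1), Finset.iSup_insert,
      ihc hcd' hcn']
    have h := row (c + 1) (by omega) hcn d hcd hdn
    rw [Nat.add_sub_cancel] at h
    rw [sup_comm]
    exact h
end

section
/- Let P = {p₁ < ⋯ < pₙ} be a finite linear order, V a finite-dimensional inner product space, and F̄ : Int(P) → gr(V) an intersection-monotone space function. Then the family {OI F̄(I)}_{I ∈ Int(P)} of values of its ×-Orthogonal Inverse is a transverse family: dim(Σ_{I ∈ Int(P)} OI F̄(I)) = Σ_{I ∈ Int(P)} dim(OI F̄(I)). -/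
open Module Submodule

section Aux

variable {V : Type*} [NormedAddCommGroup V] [InnerProductSpace ℝ V] [FiniteDimensional ℝ V]

/-- If `A ⊆ C` and `B ⊥ C` then `A ⊓ B = ⊥`. -/
private lemma aux_inf_bot {A B C : Submodule ℝ V} (hA : A ≤ C) (hB : B ≤ Cᗮ) :
    A ⊓ B = ⊥ := by
  rw [eq_bot_iff]
  intro v hv
  rw [Submodule.mem_inf] at hv
  have h0 : (inner ℝ v v : ℝ) = 0 := (hB hv.2) v (hA hv.1)
  have : v = 0 := inner_self_eq_zero.mp h0
  simp [this]

/-- If `v ∈ B`, `A ≤ B` and `v ⊥ (B ⊓ Aᗮ)`, then `v ∈ A`. -/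
private lemma aux_mem_of_orth {A B : Submodule ℝ V} (hAB : A ≤ B) {v : V}
    (hvB : v ∈ B) (hv : v ∈ (B ⊓ Aᗮ)ᗮ) : v ∈ A := by
  set w : V := v - (orthogonalProjection A v : V) with hw
  have hwo : w ∈ Aᗮ := Submodule.sub_starProjection_mem_orthogonal (K := A) v
  have hwB : w ∈ B := B.sub_mem hvB (hAB (orthogonalProjection A v).2)
  have h0 : (inner ℝ w v : ℝ) = 0 := hv w ⟨hwB, hwo⟩
  have h1 : (inner ℝ w ((orthogonalProjection A v : V)) : ℝ) = 0 :=
    (Submodule.mem_orthogonal' A w).mp hwo _ (orthogonalProjection A v).2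
  have h2 : (inner ℝ w w : ℝ) = 0 := by
    have hsplit : (inner ℝ w v : ℝ) = inner ℝ w w + inner ℝ w ((orthogonalProjection A v : V)) := by
      rw [← inner_add_right]
      congr 1
      rw [hw]; abel
    rw [h0, h1, add_zero] at hsplit
    exact hsplit.symm
  have hw0 : w = 0 := inner_self_eq_zero.mp h2
  have : v = (orthogonalProjection A v : V) := by
    have := sub_eq_zero.mp (hw ▸ hw0)
    exact this
  rw [this]
  exact (orthogonalProjection A v).2

/-- If no nonzero vector of `Y` is orthogonal to `X` then
`dim (X ⊓ Yᗮ) + dim Y = dim X`. -/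
private lemma aux_finrank (X Y : Submodule ℝ V) (h : Y ⊓ Xᗮ = ⊥) :
    finrank ℝ ↥(X ⊓ Yᗮ) + finrank ℝ ↥Y = finrank ℝ ↥X := by
  classical
  let p : ↥X →ₗ[ℝ] ↥Y := (orthogonalProjection Y).toLinearMap.comp X.subtype
  have hker : LinearMap.ker p = Submodule.comap X.subtype (X ⊓ Yᗮ) := by
    ext x
    simp only [LinearMap.mem_ker, LinearMap.comp_apply, ContinuousLinearMap.coe_coe,
      Submodule.subtype_apply, Submodule.mem_comap, Submodule.mem_inf, p]
    rw [orthogonalProjection_eq_zero_iff]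
    exact ⟨fun hx => ⟨x.2, hx⟩, fun hx => hx.2⟩
  have hrange : LinearMap.range p = ⊤ := by
    rw [← Submodule.orthogonal_eq_bot_iff, eq_bot_iff]
    intro z hz
    have hzX : (z : V) ∈ Xᗮ := by
      rw [Submodule.mem_orthogonal]
      intro u hu
      have h1 := (Submodule.mem_orthogonal _ _).mp hz (p ⟨u, hu⟩) (LinearMap.mem_range_self p ⟨u, hu⟩)
      have h2 : (inner ℝ (p ⟨u, hu⟩) z : ℝ) = inner ℝ u (z : V) := by
        simp only [LinearMap.comp_apply, ContinuousLinearMap.coe_coe,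
          Submodule.subtype_apply, p]
        exact inner_orthogonalProjection_eq_of_mem_right (K := Y) z u
      rw [h2] at h1
      exact h1
    have : (z : V) ∈ Y ⊓ Xᗮ := ⟨z.2, hzX⟩
    rw [h] at this
    have : (z : V) = 0 := this
    simpa [Submodule.mem_bot] using Subtype.ext this
  have h1 := LinearMap.finrank_range_add_finrank_ker p
  rw [hrange, hker] at h1
  have h2 : finrank ℝ ↥(Submodule.comap X.subtype (X ⊓ Yᗮ)) = finrank ℝ ↥(X ⊓ Yᗮ) :=
    (Submodule.comapSubtypeEquivOfLe inf_le_left).finrank_eq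
  rw [h2, finrank_top] at h1
  omega

/-- Dimension of a sum of two subspaces with trivial intersection. -/
private lemma aux_sup_finrank (U W : Submodule ℝ V) (h : U ⊓ W = ⊥) :
    finrank ℝ ↥(U ⊔ W) = finrank ℝ ↥U + finrank ℝ ↥W := by
  have := Submodule.finrank_sup_add_finrank_inf_eq U W
  rw [h] at this
  simpa using this

end Aux

/-- In the setting of an intersection-monotone space function
`F̄ : Int(P) → gr(V)` on the intervals of the finite linear order
`P = {p₁ < ⋯ < pₙ}` (intervals encoded as pairs `(a, b)` with `1 ≤ a ≤ b ≤ n + 1`,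
`a ≤ n`, where `b = n + 1` encodes `[p_a, ∞)`, and index-`0` values are the zero
subspace), the family of values of the `×`-Orthogonal Inverse `OI F̄` is a
transverse family: the dimension of the sum of all values equals the sum of their
dimensions. -/
theorem orthogonal_inversion_is_transverse
    {V : Type*} [NormedAddCommGroup V] [InnerProductSpace ℝ V] [FiniteDimensional ℝ V]
    (n : ℕ) (hn : 1 ≤ n) (F : ℕ → ℕ → Submodule ℝ V)
    (hzero : ∀ b, F 0 b = ⊥)
    (hmono : ∀ a b c d, 1 ≤ a → a ≤ b → b ≤ n + 1 → a ≤ n →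
      1 ≤ c → c ≤ d → d ≤ n + 1 → c ≤ n → a ≤ c → b ≤ d → F a b ≤ F c d)
    (hint : ∀ i j, 1 ≤ i → i < j → j ≤ n → F (i + 1) j ⊓ F i (j + 1) = F i j)
    (OI : ℕ → ℕ → Submodule ℝ V)
    (hOI : ∀ i j, OI i j =
      if i = j then F i i ⊓ (F (i - 1) i)ᗮ
      else (F i j ⊓ (F i (j - 1))ᗮ) ⊓ ((F (i - 1) j ⊓ (F (i - 1) (j - 1))ᗮ))ᗮ) :
    Module.finrank ℝ ↥(⨆ a ∈ Finset.Icc 1 n, ⨆ b ∈ Finset.Icc a (n + 1), OI a b) =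
      ∑ a ∈ Finset.Icc 1 n, ∑ b ∈ Finset.Icc a (n + 1),
        Module.finrank ℝ ↥(OI a b) := by
  classical
  -- convenient monotonicity (allows index 0)
  have hmono' : ∀ a b c d, a ≤ c → b ≤ d → c ≤ d → d ≤ n + 1 → c ≤ n → a ≤ b →
      F a b ≤ F c d := by
    intro a b c d h1 h2 h3 h4 h5 h6
    rcases Nat.eq_zero_or_pos a with ha | ha
    · rw [ha, hzero]; exact bot_le
    · exact hmono a b c d ha h6 (le_trans h2 h4) (le_trans h1 h5)
        (le_trans ha h1) h3 h4 h5 h1 h2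
  -- convenient intersection property
  have hint' : ∀ a b, 2 ≤ a → a < b → b ≤ n + 1 →
      F a (b - 1) ⊓ F (a - 1) b = F (a - 1) (b - 1) := by
    intro a b h2 hab hb
    have h := hint (a - 1) (b - 1) (by omega) (by omega) (by omega)
    have e1 : a - 1 + 1 = a := by omega
    have e2 : b - 1 + 1 = b := by omega
    rwa [e1, e2] at h
  -- Row lemma
  have row : ∀ r, 1 ≤ r → r ≤ n → ∀ b, r ≤ b → b ≤ n + 1 →
      ((⨆ b' ∈ Finset.Icc r b, OI r b') ≤ F r b) ∧
      (finrank ℝ ↥(⨆ b' ∈ Finset.Icc r b, OI r b') + finrank ℝ ↥(F (r - 1) b)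
        = finrank ℝ ↥(F r b)) ∧
      ((⨆ b' ∈ Finset.Icc r b, OI r b') ⊓ F (r - 1) b = ⊥) ∧
      (∑ b' ∈ Finset.Icc r b, finrank ℝ ↥(OI r b')
        = finrank ℝ ↥(⨆ b' ∈ Finset.Icc r b, OI r b')) := by
    intro r hr1 hrn b hb
    induction b, hb using Nat.le_induction with
    | base =>
          intro hr2
          have hdiag : OI r r = F r r ⊓ (F (r - 1) r)ᗮ := by rw [hOI, if_pos rfl]
          have hsup : (⨆ b' ∈ Finset.Icc r r, OI r b') = OI r r := by
            rw [Finset.Icc_self]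
            simp
          have hYX : F (r - 1) r ≤ F r r :=
            hmono' (r - 1) r r r (by omega) le_rfl le_rfl (by omega) hrn (by omega)
          refine ⟨?_, ?_, ?_, ?_⟩
          · rw [hsup, hdiag]; exact inf_le_left
          · rw [hsup, hdiag]
            exact aux_finrank (F r r) (F (r - 1) r) (aux_inf_bot hYX le_rfl)
          · rw [hsup, hdiag]
            exact aux_inf_bot (inf_le_right : F r r ⊓ (F (r - 1) r)ᗮ ≤ _)
              (Submodule.le_orthogonal_orthogonal _)
          · rw [hsup, Finset.Icc_self]
            simp
    | succ b hrb ih =>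
          intro hb1
          have hbn : b ≤ n := by omega
          have ih' := ih (by omega)
          obtain ⟨ih1, ih2, ih3, ih4⟩ := ih'
          have hicc : Finset.Icc r (b + 1) = insert (b + 1) (Finset.Icc r b) :=
            (Finset.insert_Icc_right_eq_Icc_add_one (by omega)).symm
          have hsup : (⨆ b' ∈ Finset.Icc r (b + 1), OI r b')
              = OI r (b + 1) ⊔ ⨆ b' ∈ Finset.Icc r b, OI r b' := by
            rw [hicc, Finset.iSup_insert]
          have hOIstep : OI r (b + 1)
              = (F r (b + 1) ⊓ (F r b)ᗮ) ⊓ (F (r - 1) (b + 1) ⊓ (F (r - 1) b)ᗮ)ᗮ := by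
            rw [hOI, if_neg (by omega)]
            norm_num
          have hF1 : F r b ≤ F r (b + 1) :=
            hmono' r b r (b + 1) le_rfl (by omega) (by omega) (by omega) hrn hrb
          have hF2 : F (r - 1) b ≤ F (r - 1) (b + 1) :=
            hmono' (r - 1) b (r - 1) (b + 1) le_rfl (by omega) (by omega) (by omega)
              (by omega) (by omega)
          have hF3 : F (r - 1) b ≤ F r b :=
            hmono' (r - 1) b r b (by omega) le_rfl hrb (by omega) hrn (by omega)
          have hF4 : F (r - 1) (b + 1) ≤ F r (b + 1) :=
            hmono' (r - 1) (b + 1) r (b + 1) (by omega) le_rfl (by omega) (by omega)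
              hrn (by omega)
          have hOIle1 : OI r (b + 1) ≤ F r (b + 1) := by
            rw [hOIstep]; exact le_trans inf_le_left inf_le_left
          have hOIleO : OI r (b + 1) ≤ (F r b)ᗮ := by
            rw [hOIstep]; exact le_trans inf_le_left inf_le_right
          have hOIleY : OI r (b + 1) ≤ (F (r - 1) (b + 1) ⊓ (F (r - 1) b)ᗮ)ᗮ := by
            rw [hOIstep]; exact inf_le_right
          -- disjointness of the new piece from the old row sum
          have hdisj : OI r (b + 1) ⊓ (⨆ b' ∈ Finset.Icc r b, OI r b') = ⊥ :=
            aux_inf_bot hOIleO (le_trans ih1 (Submodule.le_orthogonal_orthogonal _))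
          have hdim_sup : finrank ℝ ↥(⨆ b' ∈ Finset.Icc r (b + 1), OI r b')
              = finrank ℝ ↥(OI r (b + 1))
                + finrank ℝ ↥(⨆ b' ∈ Finset.Icc r b, OI r b') := by
            rw [hsup]
            exact aux_sup_finrank _ _ hdisj
          -- Claim A : Y ⊓ Xᗮ = ⊥
          have hA : (F (r - 1) (b + 1) ⊓ (F (r - 1) b)ᗮ)
              ⊓ (F r (b + 1) ⊓ (F r b)ᗮ)ᗮ = ⊥ := by
            rcases Nat.lt_or_ge r 2 with hr2 | hr2
            · have : r - 1 = 0 := by omega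
              rw [this, hzero]
              simp
            · rw [eq_bot_iff]
              intro v hv
              rw [Submodule.mem_inf, Submodule.mem_inf] at hv
              obtain ⟨⟨hv1, hv2⟩, hv3⟩ := hv
              have hvFr : v ∈ F r (b + 1) := hF4 hv1
              have hvFb : v ∈ F r b := aux_mem_of_orth hF1 hvFr hv3
              have hvInt : v ∈ F (r - 1) b := by
                have h := hint' r (b + 1) hr2 (by omega) (by omega)
                have : v ∈ F r (b + 1 - 1) ⊓ F (r - 1) (b + 1) := by
                  constructor
                  · simpa using hvFb
                  · exact hv1
                rw [h] at this
                simpa using this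
              have h0 : (inner ℝ v v : ℝ) = 0 := hv2 v hvInt
              rw [Submodule.mem_bot]
              exact inner_self_eq_zero.mp h0
          -- dimension bookkeeping
          have e1 : finrank ℝ ↥(F r (b + 1) ⊓ (F r b)ᗮ) + finrank ℝ ↥(F r b)
              = finrank ℝ ↥(F r (b + 1)) :=
            aux_finrank _ _ (aux_inf_bot hF1 le_rfl)
          have e2 : finrank ℝ ↥(F (r - 1) (b + 1) ⊓ (F (r - 1) b)ᗮ)
              + finrank ℝ ↥(F (r - 1) b) = finrank ℝ ↥(F (r - 1) (b + 1)) :=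
            aux_finrank _ _ (aux_inf_bot hF2 le_rfl)
          have e3 : finrank ℝ ↥(OI r (b + 1))
              + finrank ℝ ↥(F (r - 1) (b + 1) ⊓ (F (r - 1) b)ᗮ)
              = finrank ℝ ↥(F r (b + 1) ⊓ (F r b)ᗮ) := by
            rw [hOIstep]
            exact aux_finrank _ _ hA
          refine ⟨?_, ?_, ?_, ?_⟩
          · rw [hsup]
            exact sup_le hOIle1 (le_trans ih1 hF1)
          · omega
          · -- Claim B
            rcases Nat.lt_or_ge r 2 with hr2 | hr2
            · have : r - 1 = 0 := by omega
              rw [this, hzero]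
              simp
            · rw [eq_bot_iff]
              intro v hv
              rw [Submodule.mem_inf, hsup] at hv
              obtain ⟨hvT, hvF⟩ := hv
              rw [Submodule.mem_sup] at hvT
              obtain ⟨u, hu, w, hw, huw⟩ := hvT
              -- decompose v orthogonally inside F (r-1) (b+1)
              set v' : V := (orthogonalProjection (F (r - 1) b) v : V) with hv'
              have hy1 : v - v' ∈ (F (r - 1) b)ᗮ := Submodule.sub_starProjection_mem_orthogonal (K := F (r - 1) b) v
              have hy2 : v - v' ∈ F (r - 1) (b + 1) :=
                (F (r - 1) (b + 1)).sub_mem hvF (hF2 (orthogonalProjection (F (r - 1) b) v).2)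
              have huO : u ∈ (F r b)ᗮ := hOIleO hu
              have huY : u ∈ (F (r - 1) (b + 1) ⊓ (F (r - 1) b)ᗮ)ᗮ := hOIleY hu
              -- ⟪u, v⟫ = 0
              have hiv' : (inner ℝ u v' : ℝ) = 0 := by
                have : v' ∈ F r b := hF3 (orthogonalProjection (F (r - 1) b) v).2
                have h := (Submodule.mem_orthogonal _ _).mp huO v' this
                rwa [real_inner_comm] at h
              have hiy : (inner ℝ u (v - v') : ℝ) = 0 := by
                have h := (Submodule.mem_orthogonal _ _).mp huY (v - v') ⟨hy2, hy1⟩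
                rwa [real_inner_comm] at h
              have hivv : (inner ℝ u v : ℝ) = 0 := by
                have : (inner ℝ u v : ℝ) = inner ℝ u v' + inner ℝ u (v - v') := by
                  rw [← inner_add_right]; congr 1; abel
                rw [this, hiv', hiy, add_zero]
              have hiw : (inner ℝ u w : ℝ) = 0 := by
                have : w ∈ F r b := ih1 hw
                have h := (Submodule.mem_orthogonal _ _).mp huO w this
                rwa [real_inner_comm] at h
              have hiu : (inner ℝ u u : ℝ) = 0 := by
                have : (inner ℝ u v : ℝ) = inner ℝ u u + inner ℝ u w := by
                  rw [← inner_add_right, huw]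
                rw [hivv, hiw, add_zero] at this
                exact this.symm
              have hu0 : u = 0 := inner_self_eq_zero.mp hiu
              have hvw : v = w := by rw [← huw, hu0, zero_add]
              have hvFb : v ∈ F r b := by rw [hvw]; exact ih1 hw
              have hvInt : v ∈ F (r - 1) b := by
                have h := hint' r (b + 1) hr2 (by omega) (by omega)
                have : v ∈ F r (b + 1 - 1) ⊓ F (r - 1) (b + 1) := by
                  constructor
                  · simpa using hvFb
                  · exact hvF
                rw [h] at this
                simpa using this
              have : v ∈ (⨆ b' ∈ Finset.Icc r b, OI r b') ⊓ F (r - 1) b := by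
                constructor
                · rw [hvw]; exact hw
                · exact hvInt
              rw [ih3] at this
              exact this
          · rw [hdim_sup, hicc, Finset.sum_insert (by simp), ih4]
  -- Column induction
  have col : ∀ a, a ≤ n →
      (⨆ a' ∈ Finset.Icc 1 a, ⨆ b ∈ Finset.Icc a' (n + 1), OI a' b) = F a (n + 1) ∧
      (∑ a' ∈ Finset.Icc 1 a, ∑ b ∈ Finset.Icc a' (n + 1), finrank ℝ ↥(OI a' b)
        = finrank ℝ ↥(F a (n + 1))) := by
    intro a
    induction a with
    | zero =>
      intro _
      constructor
      · simp [hzero]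
      · simp only [Finset.Icc_eq_empty_of_lt (by omega : (0:ℕ) < 1)]
        rw [hzero (n + 1)]
        rw [Finset.sum_empty, finrank_bot]
    | succ a ih =>
      intro ha1
      have iha := ih (by omega)
      have hicc : Finset.Icc 1 (a + 1) = insert (a + 1) (Finset.Icc 1 a) :=
        (Finset.insert_Icc_right_eq_Icc_add_one (by omega)).symm
      obtain ⟨hr1, hr2, hr3, hr4⟩ :=
        row (a + 1) (by omega) ha1 (n + 1) (by omega) le_rfl
      have hsub : a + 1 - 1 = a := by omega
      rw [hsub] at hr2 hr3
      have hFle : F a (n + 1) ≤ F (a + 1) (n + 1) :=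
        hmono' a (n + 1) (a + 1) (n + 1) (by omega) le_rfl (by omega) le_rfl ha1 (by omega)
      have hsup : (⨆ a' ∈ Finset.Icc 1 (a + 1), ⨆ b ∈ Finset.Icc a' (n + 1), OI a' b)
          = (⨆ b ∈ Finset.Icc (a + 1) (n + 1), OI (a + 1) b) ⊔ F a (n + 1) := by
        rw [hicc, Finset.iSup_insert, iha.1]
      have hdisj : (⨆ b ∈ Finset.Icc (a + 1) (n + 1), OI (a + 1) b) ⊓ F a (n + 1) = ⊥ := hr3
      have hdim : finrank ℝ
          ↥(⨆ a' ∈ Finset.Icc 1 (a + 1), ⨆ b ∈ Finset.Icc a' (n + 1), OI a' b)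
          = finrank ℝ ↥(F (a + 1) (n + 1)) := by
        rw [hsup, aux_sup_finrank _ _ hdisj]
        omega
      constructor
      · refine Submodule.eq_of_le_of_finrank_le ?_ ?_
        · rw [hsup]
          exact sup_le hr1 hFle
        · rw [hdim]
      · rw [hicc, Finset.sum_insert (by simp), hr4, iha.2]
        rw [← aux_sup_finrank _ _ hdisj, ← hsup, hdim]
  obtain ⟨hc1, hc2⟩ := col n le_rfl
  rw [hc1, hc2]
end

section
/- Let F = {K_i}_{i=1}^n be a filtration of a finite simplicial complex K over P = {p₁ < ⋯ < pₙ} and q ≥ 0. Define the birth-death spaces ZB_q^F([p_i,p_j]) := Z_q(K_i) ∩ B_q(K_j) (cycles of K_i that are boundaries in K_j, viewed in C_q^K) and ZB_q^F([p_i,∞)) := Z_q(K_i), and the Laplacian kernels LK_q^F([p_i,p_j]) := Z_q(K_i) ⊖ (Z_q(K_i) ∩ B_q(K_{j−1})), where X ⊖ Y := X ∩ Y^⊥. Then for every non-diagonal interval [p_i,p_j] with i < j, the ⊇-Orthogonal Inverse of LK_q^F equals the ×-Orthogonal Inverse of ZB_q^F: (LK_q^F([p_i,p_j]) ⊖ LK_q^F([p_i,p_{j+1}]))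 ⊖ (LK_q^F([p_{i−1},p_j]) ⊖ LK_q^F([p_{i−1},p_{j+1}])) = (ZB_q^F([p_i,p_j]) ⊖ ZB_q^F([p_i,p_{j−1}])) ⊖ (ZB_q^F([p_{i−1},p_j]) ⊖ ZB_q^F([p_{i−1},p_{j−1}])). -/
lemma ortho_diff_aux {V : Type*} [NormedAddCommGroup V] [InnerProductSpace ℝ V]
    [FiniteDimensional ℝ V] (A X Y : Submodule ℝ V) (hYA : Y ≤ A) :
    (A ⊓ Xᗮ) ⊓ (A ⊓ Yᗮ)ᗮ = Y ⊓ Xᗮ := by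
  apply le_antisymm
  · rintro v ⟨⟨hvA, hvX⟩, hv⟩
    refine ⟨?_, hvX⟩
    set p : V := Y.starProjection v with hp
    have hpY : p ∈ Y := Y.starProjection_apply_mem v
    have hwY : v - p ∈ Yᗮ := Y.sub_starProjection_mem_orthogonal v
    have hwA : v - p ∈ A := A.sub_mem hvA (hYA hpY)
    have h1 : inner ℝ (v - p) v = (0 : ℝ) := hv _ ⟨hwA, hwY⟩
    have h2 : inner ℝ (v - p) p = (0 : ℝ) := by
      rw [real_inner_comm]; exact hwY p hpY
    have h3 : inner ℝ (v - p) (v - p) = (0 : ℝ) := by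
      rw [inner_sub_right, h1, h2, sub_zero]
    have hvp : v = p := sub_eq_zero.mp (inner_self_eq_zero.mp h3)
    exact hvp ▸ hpY
  · rintro v ⟨hvY, hvX⟩
    refine ⟨⟨hYA hvY, hvX⟩, fun u hu => ?_⟩
    rw [real_inner_comm]; exact hu.2 v hvY

/-- Let `F = {K_i}_{i=1}^n` be a filtration of a finite simplicial
complex `K` over `P = {p₁ < ⋯ < pₙ}` and `q ≥ 0`.  We model the chain-level data:
`V` is the `q`-th chain group `C_q^K` of the final complex with its standard inner
product, `V2` and `V0` are the chain groups in degrees `q+1` and `q−1`, `Cp i` and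
`Cq i ⊆ V` are the chain subgroups of `K_i` (monotone, with `Cq n = ⊤` since
`K_n = K`, and index-`0` values equal to the zero subspace), and `d1 = ∂_{q+1}`,
`d0 = ∂_q` are the boundary operators (`∂∂ = 0`).  With cycles
`Z a = ker ∂_q^{K_a}`, boundaries `Bd b = Im ∂_{q+1}^{K_b}`, birth-death spaces
`ZB a b = Z a ⊓ Bd b` (and `ZB a (n+1) = Z a` for `[p_a, ∞)`), Laplacian kernels
`LK a b = Z a ⊖ (Z a ⊓ Bd (b−1))`, and `X ⊖ Y := X ⊓ Yᗮ`, the `⊇`-Orthogonal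
Inverse of `LK` equals the `×`-Orthogonal Inverse of `ZB` on every non-diagonal
interval `[p_i, p_j]`, `i < j ≤ n`. -/
theorem laplacian_inverse_eq_birthdeath_inverse {V2 V V0 : Type*}
    [NormedAddCommGroup V2] [InnerProductSpace ℝ V2] [FiniteDimensional ℝ V2]
    [NormedAddCommGroup V] [InnerProductSpace ℝ V] [FiniteDimensional ℝ V]
    [NormedAddCommGroup V0] [InnerProductSpace ℝ V0] [FiniteDimensional ℝ V0]
    (n : ℕ) (hn : 1 ≤ n)
    (Cp : ℕ → Submodule ℝ V2) (Cq : ℕ → Submodule ℝ V)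
    (d1 : V2 →ₗ[ℝ] V) (d0 : V →ₗ[ℝ] V0)
    (hdd : d0 ∘ₗ d1 = 0)
    (hCp0 : Cp 0 = ⊥) (hCq0 : Cq 0 = ⊥)
    (hCp : Monotone Cp) (hCq : Monotone Cq) (hCqn : Cq n = ⊤)
    (hd1 : ∀ i, (Cp i).map d1 ≤ Cq i)
    (Z Bd : ℕ → Submodule ℝ V)
    (hZ : ∀ a, Z a = Cq a ⊓ LinearMap.ker d0)
    (hBd : ∀ b, Bd b = (Cp b).map d1)
    (ZB LK : ℕ → ℕ → Submodule ℝ V)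
    (hZB : ∀ a b, ZB a b = if b ≤ n then Z a ⊓ Bd b else Z a)
    (hLK : ∀ a b, LK a b = Z a ⊓ (Z a ⊓ Bd (b - 1))ᗮ) :
    ∀ i j, 1 ≤ i → i < j → j ≤ n →
      (LK i j ⊓ (LK i (j + 1))ᗮ) ⊓ ((LK (i - 1) j ⊓ (LK (i - 1) (j + 1))ᗮ))ᗮ =
        (ZB i j ⊓ (ZB i (j - 1))ᗮ) ⊓ ((ZB (i - 1) j ⊓ (ZB (i - 1) (j - 1))ᗮ))ᗮ := by
  intro i j hi hij hjn
  have hj1 : j - 1 ≤ n := le_trans (Nat.sub_le j 1) hjn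
  have key : ∀ a, LK a j ⊓ (LK a (j + 1))ᗮ = ZB a j ⊓ (ZB a (j - 1))ᗮ := by
    intro a
    rw [hLK, hLK, hZB, hZB, if_pos hjn, if_pos hj1, Nat.add_sub_cancel]
    exact ortho_diff_aux (Z a) (Z a ⊓ Bd (j - 1)) (Z a ⊓ Bd j) inf_le_left
  rw [key, key]
end

section
/- Let F = {K_i}_{i=1}^n be a filtration of a finite simplicial complex K and q ≥ 0. Let z be a nonzero element of the degree-q Grassmannian persistence diagram space OI ZB_q^F([p_i,p_j]) = ZB_q^F([p_i,p_j]) ⊖ (ZB_q^F([p_{i−1},p_j]) + ZB_q^F([p_i,p_{j−1}])). Then z is a q-cycle born precisely at p_i (its homology class in H_q(K_i) is not in the image of H_q(K_{i−1}) → H_q(K_i)) and it dies precisely at p_j (z ∈ B_q(K_j) but z ∉ B_q(K_{j−1})). -/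
/-- Let `F = {K_i}_{i=1}^n` be a filtration of a finite simplicial
complex `K` and `q ≥ 0`.  We model the chain-level data: `V = C_q^K` with its
standard inner product, `V2` and `V0` the chain groups in degrees `q+1` and `q−1`,
`Cp i` and `Cq i ⊆ V` the chain subgroups of `K_i` (monotone, index-`0` equal to
the zero subspace), and boundary operators `d1 = ∂_{q+1}`, `d0 = ∂_q` with
`∂∂ = 0`.  With cycles `Z a = ker ∂_q^{K_a}`, boundaries `Bd b = Im ∂_{q+1}^{K_b}`
and birth-death spaces `ZB a b = Z a ⊓ Bd b`, let `z` be a nonzero element of the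
degree-`q` Grassmannian persistence diagram space
`OI ZB([p_i,p_j]) = ZB(i,j) ⊖ (ZB(i−1,j) + ZB(i,j−1))` (where `X ⊖ Y := X ⊓ Yᗮ`).
Then `z` is a `q`-cycle born precisely at `p_i` — its homology class in
`H_q(K_i)` is not in the image of `H_q(K_{i−1}) → H_q(K_i)`, i.e. `z` is not of
the form `z' + b` with `z'` a cycle of `K_{i−1}` and `b` a boundary of `K_i` —
and it dies precisely at `p_j`: `z ∈ B_q(K_j)` but `z ∉ B_q(K_{j−1})`. -/
theorem grassmannian_diagram_cycles_born_and_die_precisely {V2 V V0 : Type*}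
    [NormedAddCommGroup V2] [InnerProductSpace ℝ V2] [FiniteDimensional ℝ V2]
    [NormedAddCommGroup V] [InnerProductSpace ℝ V] [FiniteDimensional ℝ V]
    [NormedAddCommGroup V0] [InnerProductSpace ℝ V0] [FiniteDimensional ℝ V0]
    (n : ℕ) (hn : 1 ≤ n)
    (Cp : ℕ → Submodule ℝ V2) (Cq : ℕ → Submodule ℝ V)
    (d1 : V2 →ₗ[ℝ] V) (d0 : V →ₗ[ℝ] V0)
    (hdd : d0 ∘ₗ d1 = 0)
    (hCp0 : Cp 0 = ⊥) (hCq0 : Cq 0 = ⊥)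
    (hCp : Monotone Cp) (hCq : Monotone Cq) (hCqn : Cq n = ⊤)
    (hd1 : ∀ i, (Cp i).map d1 ≤ Cq i)
    (Z Bd : ℕ → Submodule ℝ V)
    (hZ : ∀ a, Z a = Cq a ⊓ LinearMap.ker d0)
    (hBd : ∀ b, Bd b = (Cp b).map d1)
    (ZB : ℕ → ℕ → Submodule ℝ V)
    (hZB : ∀ a b, ZB a b = Z a ⊓ Bd b)
    (i j : ℕ) (hi : 1 ≤ i) (hij : i < j) (hj : j ≤ n)
    (z : V) (hz : z ≠ 0)
    (hmem : z ∈ ZB i j ⊓ (ZB (i - 1) j ⊔ ZB i (j - 1))ᗮ) :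
    (¬ ∃ z' b : V, z' ∈ Z (i - 1) ∧ b ∈ Bd i ∧ z = z' + b) ∧
      z ∈ Bd j ∧ z ∉ Bd (j - 1) := by
  obtain ⟨hzZB, hperp⟩ := hmem
  rw [hZB] at hzZB
  obtain ⟨hzZ, hzB⟩ := hzZB
  have hBdmono : ∀ {a b : ℕ}, a ≤ b → Bd a ≤ Bd b := by
    intro a b hab
    rw [hBd, hBd]
    exact Submodule.map_mono (hCp hab)
  have hBdZ : ∀ a, Bd a ≤ LinearMap.ker d0 := by
    intro a x hx
    rw [hBd] at hx
    obtain ⟨w, _, rfl⟩ := hx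
    simpa [LinearMap.mem_ker] using congrFun (congrArg DFunLike.coe hdd) w
  have hself : ∀ y ∈ ZB (i - 1) j ⊔ ZB i (j - 1), inner ℝ y z = (0 : ℝ) :=
    fun y hy => hperp y hy
  refine ⟨?_, hzB, ?_⟩
  · rintro ⟨z', b, hz', hb, rfl⟩
    have hb' : b ∈ ZB i (j - 1) := by
      rw [hZB, hZ]
      refine ⟨⟨?_, hBdZ i hb⟩, hBdmono (by omega) hb⟩
      rw [hBd] at hb
      exact hd1 i hb
    have hz'' : z' ∈ ZB (i - 1) j := by
      rw [hZB]
      refine ⟨hz', ?_⟩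
      have heq : z' = (z' + b) - b := by abel
      rw [heq]
      exact Submodule.sub_mem _ hzB (hBdmono (le_of_lt hij) hb)
    have hmem' : z' + b ∈ ZB (i - 1) j ⊔ ZB i (j - 1) :=
      Submodule.add_mem_sup hz'' hb'
    have h0 := hself _ hmem'
    rw [inner_self_eq_zero] at h0
    exact hz h0
  · intro hzB'
    have hmem' : z ∈ ZB (i - 1) j ⊔ ZB i (j - 1) := by
      refine Submodule.mem_sup_right ?_
      rw [hZB]
      exact ⟨hzZ, hzB'⟩
    have h0 := hself _ hmem'
    rw [inner_self_eq_zero] at h0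
    exact hz h0
end

section
/- Let P = {p₁ < ⋯ < pₙ} be a finite linear order and G an abelian group. Let m : Int(P) → G and let m' be its restriction to non-diagonal intervals Int(P) ∖ diag(P) ordered by reverse inclusion ([a,b] ≤_⊇ [c,d] iff [a,b] ⊇ [c,d]). Then the Möbius inverse of m' with respect to reverse inclusion satisfies ∂m'([p_i,p_j]) = m([p_i,p_j]) − m([p_i,p_{j+1}]) + m([p_{i−1},p_{j+1}]) − m([p_{i−1},p_j]) for 1 ≤ i < j ≤ n and ∂m'([p_i,∞)) = m([p_i,∞)) − m([p_{i−1},∞)), with the conventions [p_i,p_{n+1}] := [p_i,∞) and index-0 terms equal to 0. -/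
/-- Let `P = {p₁ < ⋯ < pₙ}` be a finite linear order, `G` an
abelian group and `m : Int(P) → G`, with `m'` its restriction to the non-diagonal
intervals ordered by reverse inclusion.  Intervals are encoded as pairs `(a, b)`
with `1 ≤ a < b ≤ n + 1`, where `b = n + 1` encodes `[p_a, ∞)`; index-`0` terms
vanish (`hzero`).  For an interval `J = [p_c, p_d]`, the intervals `I ≤_⊇ J` are
those `[p_a, p_b]` with `a ≤ c` and `b ≥ d`.  If `∂m'` is the Möbius inverse of
`m'` with respect to reverse inclusion (`Σ_{I ⊇ J} ∂m'(I) = m(J)` for every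
non-diagonal `J`), then `∂m'([p_i,p_j]) = m([p_i,p_j]) − m([p_i,p_{j+1}]) +
m([p_{i−1},p_{j+1}]) − m([p_{i−1},p_j])` for `1 ≤ i < j ≤ n`, and
`∂m'([p_i,∞)) = m([p_i,∞)) − m([p_{i−1},∞))`. -/
theorem mobius_inversion_reverse_inclusion_formula {G : Type*} [AddCommGroup G]
    (n : ℕ) (hn : 1 ≤ n) (m dm : ℕ → ℕ → G)
    (hzero : ∀ b, m 0 b = 0)
    (hinv : ∀ c d, 1 ≤ c → c < d → d ≤ n + 1 →
      ∑ a ∈ Finset.Icc 1 c, ∑ b ∈ Finset.Icc d (n + 1), dm a b = m c d) :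
    (∀ i j, 1 ≤ i → i < j → j ≤ n →
        dm i j = m i j - m i (j + 1) + m (i - 1) (j + 1) - m (i - 1) j) ∧
      (∀ i, 1 ≤ i → i ≤ n →
        dm i (n + 1) = m i (n + 1) - m (i - 1) (n + 1)) := by
  classical
  set F : ℕ → ℕ → G := fun c d => ∑ a ∈ Finset.Icc 1 c, ∑ b ∈ Finset.Icc d (n + 1), dm a b
    with hFdef
  have hF : ∀ c d, c < d → d ≤ n + 1 → F c d = m c d := by
    intro c d hcd hd
    rcases Nat.eq_zero_or_pos c with h0 | h1
    · subst h0
      simp [hFdef, hzero]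
    · exact hinv c d h1 hcd hd
  have hFtop : ∀ c, F c (n + 2) = 0 := by
    intro c
    simp [hFdef, Finset.Icc_eq_empty_of_lt (by omega : n + 1 < n + 2)]
  have hsplit1 : ∀ i d, 1 ≤ i →
      F i d = F (i - 1) d + ∑ b ∈ Finset.Icc d (n + 1), dm i b := by
    intro i d hi
    have hins : Finset.Icc 1 i = insert i (Finset.Icc 1 (i - 1)) := by
      ext x; simp; omega
    have hnot : i ∉ Finset.Icc 1 (i - 1) := by simp; omega
    simp only [hFdef]
    rw [hins, Finset.sum_insert hnot, add_comm]
  have key : ∀ i j, 1 ≤ i → i < j → j ≤ n + 1 →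
      dm i j = F i j - F (i - 1) j - F i (j + 1) + F (i - 1) (j + 1) := by
    intro i j hi hij hj
    have hins : Finset.Icc j (n + 1) = insert j (Finset.Icc (j + 1) (n + 1)) := by
      ext x; simp; omega
    have hnot : j ∉ Finset.Icc (j + 1) (n + 1) := by simp
    have h1 := hsplit1 i j hi
    have h2 := hsplit1 i (j + 1) hi
    rw [hins, Finset.sum_insert hnot] at h1
    have h2' : ∑ b ∈ Finset.Icc (j + 1) (n + 1), dm i b = F i (j + 1) - F (i - 1) (j + 1) := by
      rw [h2]; abel
    rw [h2'] at h1
    rw [h1]; abel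
  constructor
  · intro i j hi hij hj
    have h := key i j hi hij (by omega)
    rw [hF i j hij (by omega), hF (i - 1) j (by omega) (by omega),
      hF i (j + 1) (by omega) (by omega), hF (i - 1) (j + 1) (by omega) (by omega)] at h
    rw [h]; abel
  · intro i hi hin
    have h := key i (n + 1) hi (by omega) le_rfl
    rw [hF i (n + 1) (by omega) le_rfl, hF (i - 1) (n + 1) (by omega) le_rfl,
      hFtop i, hFtop (i - 1)] at h
    rw [h]; abel
end
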